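/- Let α be a multi-index of nonnegative integers with |α| ≥ 1. Then (1/ω_n) ∫_{∂B(0,1)} x^α coth(x^α) dσ(x) = 1 + ∑_{k=1}^∞ (2^{2k} B_{2k}/(2k)!) · (∏_{m: α_m≠0} (2kα_m − 1)!!)/((n+2k|α|−2)···(n+2)·n), where the series t coth t = ∑_{k≥0} (2^{2k}/(2k)!) B_{2k} t^{2k} converges for |t| < π and |x^α| ≤ 1 on the sphere. -/

import Mathlib

open MeasureTheory Real

open Finset Set Metric

open scoped ENNReal NNReal

noncomputable def cB (j : ℕ) : ℝ := 2 ^ (2 * j) * (bernoulli (2 * j) : ℝ) / (2 * j).factorial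

lemma cB_zero : cB 0 = 1 := by simp [cB]

lemma abs_bernoulli_div_factorial_le {k : ℕ} (hk : k ≠ 0) :
    |(bernoulli (2 * k) : ℝ) / (2 * k).factorial| ≤ 2 / (2 ^ (2 * k - 1) * π ^ (2 * k)) := by
  have hA := (hasSum_zeta_nat hk).tsum_eq
  set A : ℝ := (-1 : ℝ) ^ (k + 1) * (2 : ℝ) ^ (2 * k - 1) * π ^ (2 * k) *
      bernoulli (2 * k) / (2 * k).factorial with hAdef
  have h0 : 0 ≤ A := by
    rw [← hA]
    exact tsum_nonneg fun n => by positivity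
  have h2 : A ≤ 2 := by
    rw [← hA]
    have hle : ∑' n : ℕ, 1 / (n : ℝ) ^ (2 * k) ≤ ∑' n : ℕ, 1 / (n : ℝ) ^ 2 := by
      refine Summable.tsum_le_tsum (fun n => ?_) (hasSum_zeta_nat hk).summable hasSum_zeta_two.summable
      rcases Nat.eq_zero_or_pos n with rfl | hn
      · push_cast
        rw [zero_pow (by omega : 2 * k ≠ 0), zero_pow (by norm_num : (2:ℕ) ≠ 0)]
      · apply one_div_le_one_div_of_le (by positivity)
        exact pow_le_pow_right₀ (by exact_mod_cast hn) (by omega)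
    rw [hasSum_zeta_two.tsum_eq] at hle
    nlinarith [pi_lt_d2, pi_pos]
  have hD : (0:ℝ) < 2 ^ (2 * k - 1) * π ^ (2 * k) := by positivity
  have habs : A = 2 ^ (2 * k - 1) * π ^ (2 * k) * |(bernoulli (2 * k) : ℝ) / (2 * k).factorial| := by
    rw [← abs_of_nonneg h0, hAdef]
    rw [mul_div_assoc, abs_mul, abs_mul, abs_mul, abs_pow, abs_neg, abs_one, one_pow, one_mul,
      abs_of_nonneg (by positivity : (0:ℝ) ≤ (2:ℝ) ^ (2*k-1)),
      abs_of_nonneg (by positivity : (0:ℝ) ≤ π ^ (2*k)), mul_assoc]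
  rw [le_div_iff₀ hD]
  calc |(bernoulli (2 * k) : ℝ) / (2 * k).factorial| * (2 ^ (2 * k - 1) * π ^ (2 * k)) = A := by
        rw [habs]; ring
    _ ≤ 2 := h2

lemma abs_cB_le (j : ℕ) : |cB j| ≤ 4 * (1 / 9 : ℝ) ^ j := by
  rcases Nat.eq_zero_or_pos j with rfl | hj
  · rw [cB_zero]; norm_num
  · have hb := abs_bernoulli_div_factorial_le (k := j) (by omega)
    have h9 : (9:ℝ) ^ j ≤ π ^ (2 * j) := by
      have : (9:ℝ) ^ j = (3:ℝ) ^ (2 * j) := by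
        rw [pow_mul]; norm_num
      rw [this]
      exact pow_le_pow_left₀ (by norm_num) (le_of_lt pi_gt_three) _
    have h2 : (2:ℝ) ^ (2 * j) = 2 * 2 ^ (2 * j - 1) := by
      rw [← pow_succ']
      congr 1
      omega
    have hcB : |cB j| = 2 ^ (2 * j) * |(bernoulli (2 * j) : ℝ) / (2 * j).factorial| := by
      rw [cB, mul_div_assoc, abs_mul, abs_of_nonneg (by positivity : (0:ℝ) ≤ (2:ℝ)^(2*j))]
    rw [hcB, h2]
    calc 2 * 2 ^ (2 * j - 1) * |(bernoulli (2 * j) : ℝ) / (2 * j).factorial|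
        ≤ 2 * 2 ^ (2 * j - 1) * (2 / (2 ^ (2 * j - 1) * π ^ (2 * j))) := by
          apply mul_le_mul_of_nonneg_left hb (by positivity)
      _ = 4 / π ^ (2 * j) := by
          field_simp
          ring
      _ ≤ 4 * (1 / 9 : ℝ) ^ j := by
          rw [div_pow, one_pow, mul_one_div]
          exact div_le_div_of_nonneg_left (by norm_num) (by positivity) h9

lemma summable_abs_cB : Summable (fun j => |cB j|) :=
  Summable.of_nonneg_of_le (fun _ => abs_nonneg _) abs_cB_le
    ((summable_geometric_of_lt_one (by norm_num) (by norm_num)).mul_left 4)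

lemma cB_eq (j : ℕ) : cB j = 2 ^ (2 * j) * (bernoulli (2 * j) : ℝ) / (2 * j).factorial := rfl

lemma bernoulli_odd_zero' {n : ℕ} (h : Odd n) (h1 : 1 < n) : (bernoulli n : ℝ) = 0 := by
  rw [bernoulli_eq_bernoulli'_of_ne_one (by omega), bernoulli'_eq_zero_of_odd h h1]
  simp

lemma bernoulli_term_bound {x : ℝ} (hx : |x| ≤ 2) {m : ℕ} (hm : 2 ≤ m) :
    |(bernoulli m : ℝ) / m.factorial * x ^ m| ≤ 4 * (2 / 3 : ℝ) ^ m := by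
  rcases Nat.even_or_odd m with he | ho
  · obtain ⟨k, hk⟩ := he
    have hk0 : k ≠ 0 := by omega
    have hmk : m = 2 * k := by omega
    subst hmk
    have hb := abs_bernoulli_div_factorial_le hk0
    have hxp : |x ^ (2 * k)| ≤ 2 ^ (2 * k) := by
      rw [abs_pow]
      exact pow_le_pow_left₀ (abs_nonneg _) hx _
    rw [abs_mul]
    calc |(bernoulli (2*k) : ℝ) / (2*k).factorial| * |x ^ (2*k)|
        ≤ 2 / (2 ^ (2 * k - 1) * π ^ (2 * k)) * 2 ^ (2 * k) := by
          apply mul_le_mul hb hxp (abs_nonneg _) (by positivity)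
      _ = 4 / π ^ (2 * k) := by
          have h2 : (2:ℝ) ^ (2 * k) = 2 * 2 ^ (2 * k - 1) := by
            rw [← pow_succ']; congr 1; omega
          rw [h2]; field_simp; ring
      _ ≤ 4 * (2 / 3) ^ (2 * k) := by
          have h9 : (3 / 2 : ℝ) ^ (2 * k) ≤ π ^ (2 * k) :=
            pow_le_pow_left₀ (by norm_num) (by nlinarith [pi_gt_three]) _
          calc (4:ℝ) / π ^ (2*k) ≤ 4 / (3/2 : ℝ) ^ (2*k) :=
                div_le_div_of_nonneg_left (by norm_num) (by positivity) h9
            _ = 4 * (2/3) ^ (2*k) := by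
                rw [div_eq_mul_inv, ← inv_pow]
                norm_num
  · rw [bernoulli_odd_zero' ho (by omega)]
    simp
    positivity

lemma bernoulliEGF {x : ℝ} (hx : |x| ≤ 2) (hx0 : x ≠ 0) :
    HasSum (fun n => (bernoulli n : ℝ) / n.factorial * x ^ n) (x / (Real.exp x - 1)) := by
  set a : ℕ → ℝ := fun n => (bernoulli n : ℝ) / n.factorial * x ^ n with ha
  set b : ℕ → ℝ := fun n => if n = 0 then 0 else x ^ n / n.factorial with hb
  have hsa : Summable fun n => ‖a n‖ := by
    rw [← summable_nat_add_iff 2]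
    refine Summable.of_nonneg_of_le (fun n => norm_nonneg _)
      (fun n => bernoulli_term_bound hx (by omega))
      ?_
    have := (summable_geometric_of_lt_one (by norm_num : (0:ℝ) ≤ 2/3) (by norm_num)).mul_left
      (4 * (2/3)^2)
    refine this.congr fun n => ?_
    rw [mul_assoc, ← pow_add]
    ring_nf
  have hexp : HasSum (fun n => x ^ n / n.factorial) (Real.exp x) := by
    rw [Real.exp_eq_exp_ℝ]
    exact NormedSpace.expSeries_div_hasSum_exp x
  have hb_sum : HasSum b (Real.exp x - 1) := by
    have h1 : HasSum (fun n => if n = 0 then (1:ℝ) else 0) 1 := hasSum_ite_eq 0 1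
    have := hexp.sub h1
    refine this.congr_fun fun n => ?_
    by_cases hn : n = 0 <;> simp [hb, hn]
  have hsb : Summable fun n => ‖b n‖ := by
    refine Summable.of_nonneg_of_le (fun n => norm_nonneg _) (fun n => ?_)
      (Real.summable_pow_div_factorial |x|)
    by_cases hn : n = 0
    · simp only [hb, if_pos hn, norm_zero]
      positivity
    · simp only [hb, if_neg hn, Real.norm_eq_abs, abs_div, abs_pow, Nat.abs_cast]
      exact le_rfl
  have key := tsum_mul_tsum_eq_tsum_sum_antidiagonal_of_summable_norm hsa hsb
  have inner : ∀ n : ℕ, (∑ kl ∈ antidiagonal n, a kl.1 * b kl.2) = if n = 1 then x else 0 := by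
    intro n
    rw [Finset.Nat.sum_antidiagonal_eq_sum_range_succ_mk, Finset.sum_range_succ]
    have hb0 : b (n - n) = 0 := by simp [hb]
    rw [hb0, mul_zero, add_zero]
    have hterm : ∀ i ∈ range n, a i * b (n - i) =
        ((n.choose i : ℝ) * (bernoulli i : ℝ)) * x ^ n / n.factorial := by
      intro i hi
      rw [Finset.mem_range] at hi
      have hni : n - i ≠ 0 := by omega
      have hfac : (i.factorial : ℝ) * ((n - i).factorial : ℝ) * (n.choose i : ℝ)
          = (n.factorial : ℝ) := by
        rw [← Nat.cast_mul, ← Nat.cast_mul]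
        norm_cast
        rw [mul_comm (i.factorial * (n-i).factorial) (n.choose i), ← mul_assoc]
        exact Nat.choose_mul_factorial_mul_factorial (by omega)
      simp only [ha, hb, if_neg hni]
      have hxpow : x ^ i * x ^ (n - i) = x ^ n := by
        rw [← pow_add]; congr 1; omega
      rw [div_mul_eq_mul_div, div_mul_div_comm, mul_assoc, hxpow,
        div_eq_div_iff (by positivity : ((i.factorial : ℝ) * ((n - i).factorial : ℝ)) ≠ 0)
          (by positivity : ((n.factorial : ℝ)) ≠ 0), ← hfac]
      ring
    rw [Finset.sum_congr rfl hterm]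
    rw [← Finset.sum_div, ← Finset.sum_mul]
    have hs : (∑ i ∈ range n, (n.choose i : ℝ) * (bernoulli i : ℝ))
        = if n = 1 then 1 else 0 := by
      split_ifs with hn
      · subst hn; simp
      · have h2 := sum_bernoulli n
        rw [if_neg hn] at h2
        have h3 := congrArg (fun q : ℚ => (q : ℝ)) h2
        push_cast at h3
        simpa using h3
    rw [hs]
    by_cases hn : n = 1 <;> simp [hn]
  rw [hb_sum.tsum_eq] at key
  have hx1 : Real.exp x - 1 ≠ 0 := by
    rw [sub_ne_zero]
    intro h
    rw [Real.exp_eq_one_iff] at h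
    exact hx0 h
  have htsum : (∑' n, a n) = x / (Real.exp x - 1) := by
    rw [eq_div_iff hx1, key]
    simp_rw [inner]
    exact tsum_ite_eq 1 (fun _ => x)
  exact htsum ▸ hsa.of_norm.hasSum

lemma hasSum_coth {t : ℝ} (ht : |t| ≤ 1) :
    HasSum (fun k => cB k * t ^ (2 * k))
      (if t = 0 then 1 else t * (Real.cosh t / Real.sinh t)) := by
  rcases eq_or_ne t 0 with rfl | ht0
  · rw [if_pos rfl]
    have h1 : (fun k => cB k * (0:ℝ) ^ (2 * k)) 0 = 1 := by simp [cB_zero]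
    have := hasSum_single (f := fun k => cB k * (0:ℝ) ^ (2 * k)) 0
      (fun k hk => by simp [zero_pow (by omega : 2 * k ≠ 0)])
    rwa [show cB 0 * (0:ℝ) ^ (2 * 0) = 1 by simp [cB_zero]] at this
  · rw [if_neg ht0]
    have h2t : |2 * t| ≤ 2 := by
      rw [abs_mul, abs_two]
      nlinarith [ht]
    have h2t0 : 2 * t ≠ 0 := by simp [ht0]
    have hx := bernoulliEGF h2t h2t0
    set a : ℕ → ℝ := fun n => (bernoulli n : ℝ) / n.factorial * (2 * t) ^ n with ha
    set S : ℝ := 2 * t / (Real.exp (2 * t) - 1) with hS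
    have h1 : HasSum (fun n => if n = 1 then a 1 else 0) (a 1) := hasSum_ite_eq 1 (a 1)
    have ha' : HasSum (fun n => if n = 1 then 0 else a n) (S - a 1) := by
      have := hx.sub h1
      refine this.congr_fun fun n => ?_
      by_cases hn : n = 1 <;> simp [hn]
    have ha1 : a 1 = -t := by
      simp only [ha, pow_one, Nat.factorial_one, Nat.cast_one, div_one]
      rw [show ((bernoulli 1 : ℚ) : ℝ) = -1/2 by rw [bernoulli_one]; norm_num]
      ring
    have hinj : Function.Injective (fun k : ℕ => 2 * k) := fun a b h => by dsimp at h; omega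
    have hoff : ∀ n : ℕ, n ∉ Set.range (fun k : ℕ => 2 * k) →
        (if n = 1 then 0 else a n) = 0 := by
      intro n hn
      have hodd : Odd n := by
        rcases Nat.even_or_odd n with he | ho
        · exact absurd (by obtain ⟨k, hk⟩ := he; exact ⟨k, by dsimp; omega⟩) hn
        · exact ho
      by_cases hn1 : n = 1
      · simp [hn1]
      · have h1n : 1 < n := by
          rcases hodd with ⟨k, hk⟩
          omega
        simp [hn1, ha, bernoulli_odd_zero' hodd h1n]
    have hcomp := (Function.Injective.hasSum_iff hinj hoff).mpr ha'
    have heq : ∀ k : ℕ, ((fun n => if n = 1 then 0 else a n) ∘ (fun k : ℕ => 2 * k)) k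
        = cB k * t ^ (2 * k) := by
      intro k
      simp only [Function.comp_apply]
      rcases Nat.eq_zero_or_pos k with rfl | hk
      · simp [ha, cB_zero]
      · rw [if_neg (by omega)]
        simp only [ha, cB]
        rw [mul_pow]
        ring
    have hfin : S - a 1 = t * (Real.cosh t / Real.sinh t) := by
      rw [ha1, sub_neg_eq_add, hS]
      have hu : Real.exp t ≠ 0 := (Real.exp_pos t).ne'
      have hs : Real.sinh t ≠ 0 := by
        rw [Real.sinh_ne_zero]
        exact ht0
      have hs' : Real.exp t - Real.exp (-t) ≠ 0 := by
        intro h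
        apply hs
        rw [Real.sinh_eq, h, zero_div]
      have hE : Real.exp (2 * t) - 1 ≠ 0 := by
        intro h
        rw [sub_eq_zero] at h
        rw [Real.exp_eq_one_iff] at h
        exact h2t0 h
      have hE2 : Real.exp (2 * t) = Real.exp t * Real.exp t := by
        rw [two_mul, Real.exp_add]
      have hE' : Real.exp t * Real.exp t - 1 ≠ 0 := by rw [← hE2]; exact hE
      rw [Real.cosh_eq, Real.sinh_eq, Real.exp_neg, hE2]
      rw [Real.exp_neg] at hs'
      field_simp
      have h5 : -1 + Real.exp t ^ 2 ≠ 0 := by intro h; apply hE'; linear_combination h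
      linear_combination (-1:ℝ) * mul_inv_cancel₀ h5
    exact hfin ▸ (hcomp.congr_fun fun k => (heq k).symm)

lemma Gamma_nat_add_half (m : ℕ) :
    Real.Gamma ((m : ℝ) + 1/2) = (Nat.doubleFactorial (2 * m - 1) : ℝ) * Real.sqrt π / 2 ^ m := by
  induction m with
  | zero =>
      rw [Nat.cast_zero, zero_add, show (1/2 : ℝ) = 2⁻¹ by norm_num]
      rw [show Real.Gamma 2⁻¹ = Real.Gamma (1/2) by norm_num, Real.Gamma_one_half_eq]
      simp [Nat.doubleFactorial]
  | succ m ih =>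
      have hcast : ((m + 1 : ℕ) : ℝ) + 1/2 = ((m : ℝ) + 1/2) + 1 := by push_cast; ring
      rw [hcast, Real.Gamma_add_one (by positivity), ih]
      have hdf : (Nat.doubleFactorial (2 * (m + 1) - 1) : ℝ)
          = (2 * m + 1 : ℝ) * (Nat.doubleFactorial (2 * m - 1) : ℝ) := by
        rcases Nat.eq_zero_or_pos m with rfl | hm
        · simp [Nat.doubleFactorial]
        · have h1 : 2 * (m + 1) - 1 = (2 * m - 1) + 2 := by omega
          rw [h1, Nat.doubleFactorial_add_two]
          have h2 : (2 * m - 1) + 2 = 2 * m + 1 := by omega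
          rw [h2]
          push_cast
          ring
      rw [hdf]
      field_simp
      ring

lemma Gamma_nat_add (M : ℕ) {s : ℝ} (hs : 0 < s) :
    Real.Gamma ((M : ℝ) + s) = Real.Gamma s * ∏ j ∈ range M, (s + j) := by
  induction M with
  | zero => simp
  | succ M ih =>
      have hcast : ((M + 1 : ℕ) : ℝ) + s = ((M : ℝ) + s) + 1 := by push_cast; ring
      rw [hcast, Real.Gamma_add_one (by positivity), ih, Finset.prod_range_succ]
      ring

lemma moment1d (m : ℕ) :
    ∫ x : ℝ, x ^ (2 * m) * Real.exp (-x ^ 2) = Real.Gamma ((m : ℝ) + 1/2) := by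
  have heven : ∀ x : ℝ, x ^ (2 * m) * Real.exp (-x ^ 2)
      = |x| ^ (2 * m) * Real.exp (-|x| ^ 2) := by
    intro x
    rw [(even_two_mul m).pow_abs, (even_two).pow_abs]
  calc ∫ x : ℝ, x ^ (2 * m) * Real.exp (-x ^ 2)
      = ∫ x : ℝ, (fun t : ℝ => t ^ (2 * m) * Real.exp (-t ^ 2)) |x| := by
        congr 1; ext x; exact heven x
    _ = 2 * ∫ t in Ioi (0:ℝ), t ^ (2 * m) * Real.exp (-t ^ 2) :=
        integral_comp_abs (f := fun t : ℝ => t ^ (2 * m) * Real.exp (-t ^ 2))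
    _ = 2 * ∫ t in Ioi (0:ℝ), t ^ ((2 * m : ℕ) : ℝ) * Real.exp (-t ^ ((2:ℕ) : ℝ)) := by
        congr 1
        refine setIntegral_congr_fun measurableSet_Ioi fun t ht => ?_
        rw [Real.rpow_natCast, Real.rpow_natCast]
    _ = 2 * ((1 / 2) * Real.Gamma ((((2 * m : ℕ) : ℝ) + 1) / 2)) := by
        rw [show (((2:ℕ)):ℝ) = (2:ℝ) by norm_num]
        rw [integral_rpow_mul_exp_neg_rpow (by norm_num) (lt_of_lt_of_le (by norm_num) (Nat.cast_nonneg _))]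
    _ = Real.Gamma ((m : ℝ) + 1/2) := by
        rw [← mul_assoc]
        norm_num
        congr 1
        push_cast
        ring

lemma gaussian_moment_pi (n : ℕ) (b : Fin n → ℕ) :
    ∫ x : EuclideanSpace ℝ (Fin n), (∏ i, x i ^ (b i)) * Real.exp (-‖x‖ ^ 2)
      = ∏ i, ∫ y : ℝ, y ^ (b i) * Real.exp (-y ^ 2) := by
  have key : ∀ x : EuclideanSpace ℝ (Fin n), (∏ i, x i ^ (b i)) * Real.exp (-‖x‖ ^ 2)
      = ∏ i, (x i ^ (b i) * Real.exp (-(x i) ^ 2)) := by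
    intro x
    have hn : ‖x‖ ^ 2 = ∑ i, x i ^ 2 := by
      rw [EuclideanSpace.norm_eq, Real.sq_sqrt (by positivity)]
      simp [Real.norm_eq_abs, sq_abs]
    rw [hn, ← Finset.sum_neg_distrib, Real.exp_sum, Finset.prod_mul_distrib]
  simp_rw [key]
  rw [← MeasurePreserving.integral_comp'
    (EuclideanSpace.volume_preserving_symm_measurableEquiv_toLp (Fin n)).symm
    (fun x : EuclideanSpace ℝ (Fin n) => ∏ i, (x i ^ (b i) * Real.exp (-(x i) ^ 2)))]
  have : ∀ y : Fin n → ℝ,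
      (∏ i, (((MeasurableEquiv.toLp 2 (Fin n → ℝ)).symm.symm y) i ^ (b i)
        * Real.exp (-(((MeasurableEquiv.toLp 2 (Fin n → ℝ)).symm.symm y) i) ^ 2)))
      = ∏ i, (y i ^ (b i) * Real.exp (-(y i) ^ 2)) := fun y => rfl
  simp_rw [this]
  exact MeasureTheory.integral_fintype_prod_eq_prod (ι := Fin n)
    (fun i (y : ℝ) => y ^ (b i) * Real.exp (-y ^ 2))

lemma integral_volumeIoiPow (m : ℕ) (ψ : ℝ → ℝ) :
    ∫ x : Ioi (0:ℝ), ψ x ∂(Measure.volumeIoiPow m) = ∫ r in Ioi (0:ℝ), r ^ m * ψ r := by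
  simp only [Measure.volumeIoiPow, ENNReal.ofReal]
  rw [integral_withDensity_eq_integral_smul
      ((measurable_subtype_coe.pow_const _).real_toNNReal),
    integral_subtype_comap measurableSet_Ioi (fun a : ℝ => Real.toNNReal (a ^ m) • ψ a)]
  refine setIntegral_congr_fun measurableSet_Ioi (fun x hx => ?_)
  rw [NNReal.smul_def, Real.coe_toNNReal _ (pow_nonneg hx.out.le _), smul_eq_mul]

lemma integral_polar (n : ℕ) (hn : 1 ≤ n) (g : EuclideanSpace ℝ (Fin n) → ℝ) :
    ∫ x, g x = ∫ p : sphere (0 : EuclideanSpace ℝ (Fin n)) 1 × Ioi (0:ℝ),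
      g ((p.2 : ℝ) • (p.1 : EuclideanSpace ℝ (Fin n)))
      ∂((volume : Measure (EuclideanSpace ℝ (Fin n))).toSphere.prod
          (Measure.volumeIoiPow (n - 1))) := by
  haveI : Nontrivial (EuclideanSpace ℝ (Fin n)) := by
    have h : 0 < Module.finrank ℝ (EuclideanSpace ℝ (Fin n)) := by
      rw [finrank_euclideanSpace_fin]; omega
    exact Module.nontrivial_of_finrank_pos h
  have hdim : Module.finrank ℝ (EuclideanSpace ℝ (Fin n)) = n := finrank_euclideanSpace_fin
  have h1 : ∫ x : ({0}ᶜ : Set (EuclideanSpace ℝ (Fin n))), g x.1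
        ∂((volume : Measure (EuclideanSpace ℝ (Fin n))).comap Subtype.val)
      = ∫ x, g x ∂(volume : Measure (EuclideanSpace ℝ (Fin n))) := by
    rw [integral_subtype_comap (measurableSet_singleton (0:EuclideanSpace ℝ (Fin n))).compl
      (fun x => g x), MeasureTheory.restrict_compl_singleton]
  have h2 := (Measure.measurePreserving_homeomorphUnitSphereProd
      (volume : Measure (EuclideanSpace ℝ (Fin n)))).integral_comp
      (Homeomorph.measurableEmbedding _)
      (fun p : sphere (0:EuclideanSpace ℝ (Fin n)) 1 × Ioi (0:ℝ)
        => g ((p.2 : ℝ) • (p.1 : EuclideanSpace ℝ (Fin n))))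
  rw [hdim] at h2
  rw [← h1, ← h2]
  refine integral_congr_ae (Filter.Eventually.of_forall fun x => ?_)
  simp only [homeomorphUnitSphereProd_apply_fst_coe, homeomorphUnitSphereProd_apply_snd_coe]
  rw [smul_inv_smul₀ (norm_ne_zero_iff.2 x.2)]

lemma sphere_monomial (n : ℕ) (hn : 3 ≤ n) (β : Fin n → ℕ) :
    ∫ ω : sphere (0 : EuclideanSpace ℝ (Fin n)) 1,
        ∏ i, ((ω : EuclideanSpace ℝ (Fin n)) i) ^ (2 * β i)
      ∂((volume : Measure (EuclideanSpace ℝ (Fin n))).toSphere)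
    = (2 * π ^ ((n:ℝ)/2) / Real.Gamma ((n:ℝ)/2)) *
        (∏ i, (Nat.doubleFactorial (2 * β i - 1) : ℝ)) /
        ∏ j ∈ range (∑ i, β i), ((n:ℝ) + 2 * j) := by
  set M := ∑ i, β i with hM
  set S := ∫ ω : sphere (0 : EuclideanSpace ℝ (Fin n)) 1,
      ∏ i, ((ω : EuclideanSpace ℝ (Fin n)) i) ^ (2 * β i)
    ∂((volume : Measure (EuclideanSpace ℝ (Fin n))).toSphere) with hS
  -- Gaussian integral, computed via Fubini
  have h1 : ∫ x : EuclideanSpace ℝ (Fin n), (∏ i, x i ^ (2 * β i)) * Real.exp (-‖x‖ ^ 2)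
      = ∏ i, Real.Gamma ((β i : ℝ) + 1/2) := by
    rw [gaussian_moment_pi n (fun i => 2 * β i)]
    exact Finset.prod_congr rfl fun i _ => moment1d (β i)
  -- Gaussian integral, computed via polar coordinates
  have h2 : ∫ x : EuclideanSpace ℝ (Fin n), (∏ i, x i ^ (2 * β i)) * Real.exp (-‖x‖ ^ 2)
      = S * ((1/2) * Real.Gamma ((M:ℝ) + (n:ℝ)/2)) := by
    rw [integral_polar n (by omega)]
    have hsep : ∀ p : sphere (0 : EuclideanSpace ℝ (Fin n)) 1 × Ioi (0:ℝ),
        (∏ i, ((p.2 : ℝ) • (p.1 : EuclideanSpace ℝ (Fin n))) i ^ (2 * β i)) *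
          Real.exp (-‖(p.2 : ℝ) • (p.1 : EuclideanSpace ℝ (Fin n))‖ ^ 2)
        = (∏ i, ((p.1 : EuclideanSpace ℝ (Fin n)) i) ^ (2 * β i)) *
            ((p.2:ℝ) ^ (2*M) * Real.exp (-(p.2:ℝ) ^ 2)) := by
      rintro ⟨ω, r⟩
      have hω : ‖(ω : EuclideanSpace ℝ (Fin n))‖ = 1 := mem_sphere_zero_iff_norm.mp ω.2
      have hr : (0:ℝ) < (r : ℝ) := r.2
      have hnorm : ‖(r : ℝ) • (ω : EuclideanSpace ℝ (Fin n))‖ = (r:ℝ) := by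
        rw [norm_smul, hω, mul_one, Real.norm_eq_abs, abs_of_pos hr]
      have hcoord : ∀ i, ((r : ℝ) • (ω : EuclideanSpace ℝ (Fin n))) i
          = (r:ℝ) * (ω : EuclideanSpace ℝ (Fin n)) i := fun i => rfl
      simp only [hnorm, hcoord, mul_pow]
      rw [Finset.prod_mul_distrib, Finset.prod_pow_eq_pow_sum]
      have hsum : ∑ i, 2 * β i = 2 * M := by rw [hM, Finset.mul_sum]
      rw [hsum]
      ring
    rw [integral_congr_ae (Filter.Eventually.of_forall hsep)]
    rw [MeasureTheory.integral_prod_mul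
      (f := fun ω : sphere (0 : EuclideanSpace ℝ (Fin n)) 1 =>
        ∏ i, ((ω : EuclideanSpace ℝ (Fin n)) i) ^ (2 * β i))
      (g := fun r : Ioi (0:ℝ) => (r:ℝ) ^ (2*M) * Real.exp (-(r:ℝ) ^ 2))]
    rw [← hS]
    congr 1
    rw [integral_volumeIoiPow (n-1) (fun r => r ^ (2*M) * Real.exp (-r ^ 2))]
    have hexp : ∀ r ∈ Ioi (0:ℝ), r ^ (n-1) * (r ^ (2*M) * Real.exp (-r ^ 2))
        = r ^ ((((2*M + n - 1 : ℕ)) : ℝ)) * Real.exp (-r ^ ((2:ℝ))) := by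
      intro r hr
      rw [Real.rpow_natCast, Real.rpow_two, ← mul_assoc, ← pow_add]
      congr 2
      omega
    rw [setIntegral_congr_fun measurableSet_Ioi hexp,
      integral_rpow_mul_exp_neg_rpow (by norm_num)
        (lt_of_lt_of_le (by norm_num) (Nat.cast_nonneg _))]
    congr 1
    rw [Nat.cast_sub (by omega)]
    push_cast
    ring
  -- solve for S
  have hΓpos : 0 < Real.Gamma ((M:ℝ) + (n:ℝ)/2) := Real.Gamma_pos_of_pos (by positivity)
  have hSval : S = (∏ i, Real.Gamma ((β i : ℝ) + 1/2)) /
      ((1/2) * Real.Gamma ((M:ℝ) + (n:ℝ)/2)) := by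
    rw [eq_div_iff (by positivity), ← h1, h2]
  -- evaluate the Gamma products
  have hnum : ∏ i, Real.Gamma ((β i : ℝ) + 1/2)
      = (∏ i, (Nat.doubleFactorial (2 * β i - 1) : ℝ)) * π ^ ((n:ℝ)/2) / 2 ^ M := by
    have : ∀ i ∈ Finset.univ (α := Fin n), Real.Gamma ((β i : ℝ) + 1/2)
        = (Nat.doubleFactorial (2 * β i - 1) : ℝ) * Real.sqrt π / 2 ^ (β i) :=
      fun i _ => _root_.Gamma_nat_add_half (β i)
    rw [Finset.prod_congr rfl this, Finset.prod_div_distrib, Finset.prod_mul_distrib,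
      Finset.prod_const, Finset.prod_pow_eq_pow_sum, ← hM, Finset.card_univ, Fintype.card_fin]
    congr 2
    rw [Real.sqrt_eq_rpow, ← Real.rpow_natCast (π ^ ((1:ℝ)/2)) n, ← Real.rpow_mul pi_pos.le]
    congr 1
    ring
  have hden : Real.Gamma ((M:ℝ) + (n:ℝ)/2)
      = Real.Gamma ((n:ℝ)/2) * (∏ j ∈ range M, ((n:ℝ) + 2 * j)) / 2 ^ M := by
    rw [Gamma_nat_add M (by positivity : (0:ℝ) < (n:ℝ)/2)]
    have : ∀ j ∈ range M, ((n:ℝ)/2 + j) = ((n:ℝ) + 2 * j) / 2 := by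
      intro j _; ring
    rw [Finset.prod_congr rfl this, Finset.prod_div_distrib, Finset.prod_const,
      Finset.card_range]
    ring
  rw [hSval, hnum, hden]
  have hprodpos : 0 < ∏ j ∈ range M, ((n:ℝ) + 2 * j) :=
    Finset.prod_pos fun j _ => by positivity
  have hΓn : 0 < Real.Gamma ((n:ℝ)/2) := Real.Gamma_pos_of_pos (by positivity)
  have hpow : (0:ℝ) < 2 ^ M := by positivity
  field_simp

open Classical in
/-- For a multi-index `α` of nonnegative integers with `|α| ≥ 1`,
`(1/ω_n) ∫_{∂B(0,1)} x^α coth(x^α) dσ(x)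
  = 1 + ∑_{k=1}^∞ (2^{2k} B_{2k}/(2k)!) (∏_{m : α_m ≠ 0} (2kα_m − 1)!!) /
      ((n+2k|α|−2)⋯(n+2)·n)`,
where `x^α coth(x^α) = x^α cosh(x^α)/sinh(x^α)` is interpreted as `1` when `x^α = 0`, `ω_n = 2π^{n/2}/Γ(n/2)`,
and the denominator is `∏_{j=0}^{k|α|−1} (n + 2j)`. -/
theorem integral_coth_monomial_sphere (n : ℕ) (hn : 3 ≤ n) (α : Fin n → ℕ)
    (hα : 1 ≤ ∑ i, α i) :
    (1 / (2 * π ^ ((n : ℝ) / 2) / Real.Gamma ((n : ℝ) / 2))) *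
      ∫ x : Metric.sphere (0 : EuclideanSpace ℝ (Fin n)) 1,
        (if (∏ i : Fin n, ((x : EuclideanSpace ℝ (Fin n)) i) ^ (α i)) = 0 then 1 else
          (∏ i : Fin n, ((x : EuclideanSpace ℝ (Fin n)) i) ^ (α i)) *
            (Real.cosh (∏ i : Fin n, ((x : EuclideanSpace ℝ (Fin n)) i) ^ (α i)) /
              Real.sinh (∏ i : Fin n, ((x : EuclideanSpace ℝ (Fin n)) i) ^ (α i))))
        ∂((volume : Measure (EuclideanSpace ℝ (Fin n))).toSphere) =
    1 + ∑' k : ℕ, (2 ^ (2 * (k + 1)) * (bernoulli (2 * (k + 1)) : ℝ) /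
        (Nat.factorial (2 * (k + 1)))) *
      ((∏ m ∈ Finset.univ.filter (fun m => α m ≠ 0),
          (Nat.doubleFactorial (2 * (k + 1) * α m - 1) : ℝ)) /
        ∏ j ∈ Finset.range ((k + 1) * (∑ i, α i)), ((n : ℝ) + 2 * j)) := by
  set W : ℝ := 2 * π ^ ((n : ℝ) / 2) / Real.Gamma ((n : ℝ) / 2) with hW
  have hWpos : 0 < W := by
    rw [hW]
    have h1 : (0:ℝ) < π ^ ((n:ℝ)/2) := Real.rpow_pos_of_pos pi_pos _
    have h2 : (0:ℝ) < Real.Gamma ((n:ℝ)/2) := Real.Gamma_pos_of_pos (by positivity)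
    positivity
  set P : sphere (0 : EuclideanSpace ℝ (Fin n)) 1 → ℝ :=
    fun x => ∏ i, ((x : EuclideanSpace ℝ (Fin n)) i) ^ (α i) with hPdef
  set σ := (volume : Measure (EuclideanSpace ℝ (Fin n))).toSphere with hσ
  -- coordinate bound
  have hcoord : ∀ (x : sphere (0 : EuclideanSpace ℝ (Fin n)) 1) (i : Fin n),
      |(x : EuclideanSpace ℝ (Fin n)) i| ≤ 1 := by
    intro x i
    have hx : ‖(x : EuclideanSpace ℝ (Fin n))‖ = 1 := mem_sphere_zero_iff_norm.mp x.2
    have h3 : ∑ j, ((x : EuclideanSpace ℝ (Fin n)) j) ^ 2 = 1 := by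
      have h4 : ‖(x : EuclideanSpace ℝ (Fin n))‖ ^ 2 = 1 := by rw [hx]; norm_num
      rw [EuclideanSpace.norm_eq, Real.sq_sqrt (by positivity)] at h4
      simpa [Real.norm_eq_abs, sq_abs] using h4
    have h2 : ((x : EuclideanSpace ℝ (Fin n)) i) ^ 2
        ≤ ∑ j, ((x : EuclideanSpace ℝ (Fin n)) j) ^ 2 :=
      Finset.single_le_sum (f := fun j => ((x : EuclideanSpace ℝ (Fin n)) j) ^ 2)
        (fun j _ => sq_nonneg _) (Finset.mem_univ i)
    rw [h3] at h2
    nlinarith [sq_abs ((x : EuclideanSpace ℝ (Fin n)) i), abs_nonneg ((x : EuclideanSpace ℝ (Fin n)) i)]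
  have habs : ∀ x, |P x| ≤ 1 := by
    intro x
    rw [hPdef]
    simp only
    rw [abs_prod]
    refine Finset.prod_le_one (fun i _ => abs_nonneg _) (fun i _ => ?_)
    rw [abs_pow]
    exact pow_le_one₀ (abs_nonneg _) (hcoord x i)
  -- continuity of P
  have hPcont : Continuous P := by
    rw [hPdef]
    exact continuous_finset_prod _ fun i _ =>
      ((continuous_apply i).comp ((PiLp.continuous_ofLp 2 _).comp continuous_subtype_val)).pow _
  -- pointwise series expansion of the integrand
  have hpt : ∀ x : sphere (0 : EuclideanSpace ℝ (Fin n)) 1,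
      (if P x = 0 then (1:ℝ) else P x * (Real.cosh (P x) / Real.sinh (P x)))
        = ∑' k : ℕ, cB k * (P x) ^ (2 * k) := by
    intro x
    have h := (hasSum_coth (habs x)).tsum_eq
    by_cases h0 : P x = 0
    · rw [if_pos h0]
      rw [if_pos h0] at h
      exact h.symm
    · rw [if_neg h0]
      rw [if_neg h0] at h
      exact h.symm
  rw [integral_congr_ae (Filter.Eventually.of_forall hpt)]
  -- interchange sum and integral
  have hmeas : ∀ k : ℕ, AEStronglyMeasurable (fun x => cB k * (P x) ^ (2 * k)) σ :=
    fun k => (continuous_const.mul (hPcont.pow _)).aestronglyMeasurable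
  have hbd : ∀ (k : ℕ) (x : sphere (0 : EuclideanSpace ℝ (Fin n)) 1),
      ‖cB k * (P x) ^ (2 * k)‖ ≤ |cB k| := by
    intro k x
    rw [Real.norm_eq_abs, abs_mul]
    calc |cB k| * |(P x) ^ (2 * k)| ≤ |cB k| * 1 := by
          apply mul_le_mul_of_nonneg_left _ (abs_nonneg _)
          rw [abs_pow]
          exact pow_le_one₀ (abs_nonneg _) (habs x)
      _ = |cB k| := mul_one _
  have hlint : ∑' k : ℕ, ∫⁻ x, ‖cB k * (P x) ^ (2 * k)‖₊ ∂σ ≠ ⊤ := by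
    have hle : ∀ k : ℕ, ∫⁻ x, ‖cB k * (P x) ^ (2 * k)‖₊ ∂σ ≤ (‖cB k‖₊ : ℝ≥0∞) * σ univ := by
      intro k
      calc ∫⁻ x, ‖cB k * (P x) ^ (2 * k)‖₊ ∂σ ≤ ∫⁻ _, (‖cB k‖₊ : ℝ≥0∞) ∂σ := by
            refine lintegral_mono fun x => ?_
            rw [ENNReal.coe_le_coe, ← NNReal.coe_le_coe, coe_nnnorm, coe_nnnorm,
              Real.norm_eq_abs (cB k)]
            exact hbd k x
        _ = (‖cB k‖₊ : ℝ≥0∞) * σ univ := lintegral_const _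
    refine ne_top_of_le_ne_top ?_ (ENNReal.tsum_le_tsum hle)
    rw [ENNReal.tsum_mul_right]
    apply ENNReal.mul_ne_top
    · rw [ENNReal.tsum_coe_ne_top_iff_summable]
      rw [← NNReal.summable_coe]
      refine summable_abs_cB.congr fun k => ?_
      rw [coe_nnnorm, Real.norm_eq_abs]
    · exact measure_ne_top σ univ
  rw [MeasureTheory.integral_tsum hmeas hlint]
  -- evaluate each integral
  set Num : ℕ → ℝ := fun k => ∏ i, (Nat.doubleFactorial (2 * (k * α i) - 1) : ℝ) with hNum
  set Den : ℕ → ℝ := fun k => ∏ j ∈ range (k * ∑ i, α i), ((n:ℝ) + 2 * j) with hDen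
  set T : ℕ → ℝ := fun k => cB k * (Num k / Den k) with hT
  have hI : ∀ k : ℕ, ∫ x, cB k * (P x) ^ (2 * k) ∂σ = W * T k := by
    intro k
    rw [integral_const_mul]
    have hPk : ∀ x : sphere (0 : EuclideanSpace ℝ (Fin n)) 1,
        (P x) ^ (2 * k) = ∏ i, ((x : EuclideanSpace ℝ (Fin n)) i) ^ (2 * (k * α i)) := by
      intro x
      rw [hPdef]
      simp only
      rw [← Finset.prod_pow]
      refine Finset.prod_congr rfl fun i _ => ?_
      rw [← pow_mul]
      congr 1
      ring
    rw [integral_congr_ae (Filter.Eventually.of_forall fun x => by rw [hPk x])]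
    rw [hσ, sphere_monomial n hn (fun i => k * α i)]
    have hsum : ∑ i, k * α i = k * ∑ i, α i := by rw [Finset.mul_sum]
    rw [hsum, hT, hNum, hDen]
    simp only
    rw [← hW]
    ring
  simp_rw [hI]
  -- summability of T
  have hTsummable : Summable T := by
    have hIs : Summable (fun k => W * T k) := by
      refine Summable.of_norm_bounded (g := fun k => |cB k| * (σ univ).toReal * 1)
        (((summable_abs_cB.mul_right _).mul_right _)) (fun k => ?_)
      rw [← hI k]
      exact norm_integral_le_of_norm_le_const
        (Filter.Eventually.of_forall fun x => hbd k x) |>.trans_eq (by rw [measureReal_def]; ring)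
    have := hIs.mul_left (1 / W)
    refine this.congr fun k => ?_
    field_simp
  rw [tsum_mul_left, ← mul_assoc, one_div, inv_mul_cancel₀ hWpos.ne', one_mul]
  rw [Summable.tsum_eq_zero_add hTsummable]
  have hT0 : T 0 = 1 := by
    simp only [hT, hNum, hDen, cB_zero]
    simp
  rw [hT0]
  congr 1
  refine tsum_congr fun k => ?_
  have hfilter : (∏ m ∈ Finset.univ.filter (fun m => α m ≠ 0),
        (Nat.doubleFactorial (2 * (k + 1) * α m - 1) : ℝ))
      = ∏ i, (Nat.doubleFactorial (2 * ((k+1) * α i) - 1) : ℝ) := by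
    rw [Finset.prod_filter]
    refine Finset.prod_congr rfl fun i _ => ?_
    by_cases h0 : α i = 0
    · simp [h0, Nat.doubleFactorial]
    · rw [if_pos h0]
      congr 2
      ring
  simp only [hT, hNum, hDen, cB_eq]
  rw [hfilter]
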